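/- arXiv:1211.3443 — 3 statements merged into one kernel-verified Lean document; each statement's English description precedes it below -/
import Mathlib

section
/- For all integers a ≥ 1 and 1 ≤ n ≤ 2^a, one has v₂(C(2^a, n) · 2^{n-1}) ≥ a, with equality if and only if n = 1 or n = 2. -/
lemma aux_lt_two_pow_pred : ∀ n : ℕ, 3 ≤ n → n < 2 ^ (n - 1) := by
  intro n h
  induction n with
  | zero => omega
  | succ m ih =>
    rcases Nat.lt_or_ge m 3 with hm | hm
    · interval_cases m <;> simp_all <;> omega
    · have := ih (by omega)
      have h2 : 2 ^ (m - 1) + 2 ^ (m - 1) = 2 ^ (m + 1 - 1) := by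
        rw [← two_mul, ← pow_succ']
        congr 1
        omega
      omega

theorem stmt_7 (a n : ℕ) (ha : 1 ≤ a) (hn1 : 1 ≤ n) (hn2 : n ≤ 2 ^ a) :
    a ≤ padicValNat 2 ((2 ^ a).choose n * 2 ^ (n - 1)) ∧
    (padicValNat 2 ((2 ^ a).choose n * 2 ^ (n - 1)) = a ↔ n = 1 ∨ n = 2) := by
  haveI : Fact (Nat.Prime 2) := ⟨Nat.prime_two⟩
  have hn0 : 0 < n := hn1
  have hcpos : 0 < (2 ^ a).choose n := Nat.choose_pos hn2
  -- key: v₂(choose) + v₂(n) = a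
  have key : padicValNat 2 ((2 ^ a).choose n) + padicValNat 2 n = a := by
    have h := Nat.Prime.emultiplicity_choose_prime_pow_add_emultiplicity
      Nat.prime_two hn2 (by omega)
    rw [← padicValNat_eq_emultiplicity hcpos.ne', ← padicValNat_eq_emultiplicity hn0.ne',
      ← Nat.cast_add] at h
    exact_mod_cast h
  -- v₂(n) ≤ n - 1
  have hdvd : 2 ^ padicValNat 2 n ∣ n := pow_padicValNat_dvd
  have hle : 2 ^ padicValNat 2 n ≤ n := Nat.le_of_dvd hn0 hdvd
  have hvlt : padicValNat 2 n < 2 ^ padicValNat 2 n := Nat.lt_two_pow_self (n := padicValNat 2 n)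
  have hv : padicValNat 2 n ≤ n - 1 := by omega
  -- total valuation
  have htot : padicValNat 2 ((2 ^ a).choose n * 2 ^ (n - 1)) =
      padicValNat 2 ((2 ^ a).choose n) + (n - 1) := by
    rw [padicValNat.mul (by omega) (by positivity), padicValNat.prime_pow]
  constructor
  · omega
  · constructor
    · intro h
      -- then v₂(n) = n - 1, so 2^(n-1) ≤ n, forcing n ≤ 2
      have hveq : padicValNat 2 n = n - 1 := by omega
      rw [hveq] at hle
      by_contra hc
      push_neg at hc
      have h3 : 3 ≤ n := by omega
      have := aux_lt_two_pow_pred n h3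
      omega
    · rintro (rfl | rfl)
      · have h1 : padicValNat 2 1 = 0 := by simp
        omega
      · have h2 : padicValNat 2 2 = 1 := by
          simpa using padicValNat.prime_pow (p := 2) 1
        rw [h2] at key
        omega
end

section
/- In the ring ℤ[y₁, y₂]/(y₁² - 2y₁, y₂² - 2y₂, 2^m y₁, 2^m y₂) with m ≥ 1, the element 2^c · y₁y₂ is nonzero whenever 0 ≤ c < m. -/
open MvPolynomial in
theorem stmt_13 (m c : ℕ) (hm : 1 ≤ m) (hc : c < m) :
    let R := MvPolynomial (Fin 2) ℤ ⧸ Ideal.span (α := MvPolynomial (Fin 2) ℤ)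
      {(X 0 : MvPolynomial (Fin 2) ℤ) ^ 2 - 2 * X 0, X 1 ^ 2 - 2 * X 1,
        2 ^ m * X 0, 2 ^ m * X 1}
    let y₁ : R := Ideal.Quotient.mk _ (X 0)
    let y₂ : R := Ideal.Quotient.mk _ (X 1)
    2 ^ c * (y₁ * y₂) ≠ 0 := by
  intro R y₁ y₂ h
  -- Witness ring: group algebra (ZMod 2^m)[C₂ × C₂]
  set G := Multiplicative (ZMod 2 × ZMod 2) with hG
  set A := MonoidAlgebra (ZMod (2^m)) G with hA
  set g : A := MonoidAlgebra.of (ZMod (2^m)) G (Multiplicative.ofAdd ((1 : ZMod 2), (0 : ZMod 2))) with hg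
  set hE : A := MonoidAlgebra.of (ZMod (2^m)) G (Multiplicative.ofAdd ((0 : ZMod 2), (1 : ZMod 2))) with hh
  have hg2 : g * g = 1 := by
    rw [hg, ← map_mul]
    have : (Multiplicative.ofAdd ((1 : ZMod 2), (0 : ZMod 2))) *
        (Multiplicative.ofAdd ((1 : ZMod 2), (0 : ZMod 2))) = 1 := by decide
    rw [this, map_one]
  have hh2 : hE * hE = 1 := by
    rw [hh, ← map_mul]
    have : (Multiplicative.ofAdd ((0 : ZMod 2), (1 : ZMod 2))) *
        (Multiplicative.ofAdd ((0 : ZMod 2), (1 : ZMod 2))) = 1 := by decide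
    rw [this, map_one]
  have h2m : (2 ^ m : A) = 0 := by
    have h0 : ((2 ^ m : ℕ) : A) = 0 := by
      rw [← map_natCast (algebraMap (ZMod (2^m)) A)]
      simp [ZMod.natCast_self]
    rw [Nat.cast_pow, Nat.cast_ofNat] at h0
    exact h0
  let φ : MvPolynomial (Fin 2) ℤ →+* A :=
    MvPolynomial.eval₂Hom (Int.castRingHom A) (fun i => if i = 0 then 1 + g else 1 + hE)
  have hφX0 : φ (X 0) = 1 + g := by simp [φ]
  have hφX1 : φ (X 1) = 1 + hE := by simp [φ]
  have hker : Ideal.span {(X 0 : MvPolynomial (Fin 2) ℤ) ^ 2 - 2 * X 0, X 1 ^ 2 - 2 * X 1,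
        2 ^ m * X 0, 2 ^ m * X 1} ≤ RingHom.ker φ := by
    rw [Ideal.span_le]
    intro p hp
    simp only [Set.mem_insert_iff, Set.mem_singleton_iff] at hp
    rcases hp with rfl | rfl | rfl | rfl <;>
      simp only [SetLike.mem_coe, RingHom.mem_ker, map_sub, map_mul, map_pow, map_ofNat,
        hφX0, hφX1]
    · linear_combination hg2
    · linear_combination hh2
    · rw [h2m, zero_mul]
    · rw [h2m, zero_mul]
  have hmem : (2 ^ c * (X 0 * X 1) : MvPolynomial (Fin 2) ℤ) ∈ Ideal.span
      {(X 0 : MvPolynomial (Fin 2) ℤ) ^ 2 - 2 * X 0, X 1 ^ 2 - 2 * X 1,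
        2 ^ m * X 0, 2 ^ m * X 1} := by
    rw [← Ideal.Quotient.eq_zero_iff_mem]
    push_cast [map_mul, map_pow] at h ⊢
    convert h using 2 <;> rw [map_ofNat]
  have := hker hmem
  rw [RingHom.mem_ker] at this
  rw [map_mul, map_mul, map_pow, map_ofNat, hφX0, hφX1] at this
  -- now: (2:A)^c * ((1+g)*(1+hE)) = 0, contradiction via coefficient at g*h
  set x : G := Multiplicative.ofAdd ((1 : ZMod 2), (0 : ZMod 2)) with hx
  set y : G := Multiplicative.ofAdd ((0 : ZMod 2), (1 : ZMod 2)) with hy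
  have hz : (1 + g) * (1 + hE) = (MonoidAlgebra.single (1 : G) (1 : ZMod (2^m)))
      + MonoidAlgebra.single x 1 + MonoidAlgebra.single y 1
      + MonoidAlgebra.single (x * y) 1 := by
    have hmul : (MonoidAlgebra.single x (1 : ZMod (2^m))) * MonoidAlgebra.single y 1
        = MonoidAlgebra.single (x * y) 1 := by
      rw [MonoidAlgebra.single_mul_single, mul_one]
    rw [hg, hh, MonoidAlgebra.of_apply, MonoidAlgebra.of_apply, ← hmul,
      ← MonoidAlgebra.one_def]
    ring
  have hcast : (2 : A) ^ c = ((2 ^ c : ℕ) : A) := by push_cast; ring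
  rw [hcast, ← nsmul_eq_mul, hz] at this
  rw [smul_add, smul_add, smul_add, MonoidAlgebra.smul_single, MonoidAlgebra.smul_single,
    MonoidAlgebra.smul_single, MonoidAlgebra.smul_single] at this
  have hval := Finsupp.ext_iff.mp (congrArg MonoidAlgebra.coeff this) (x * y)
  have h1 : (1 : G) ≠ x * y := by decide
  have h2 : x ≠ x * y := by decide
  have h3 : y ≠ x * y := by decide
  rw [MonoidAlgebra.coeff_add, MonoidAlgebra.coeff_add, MonoidAlgebra.coeff_add,
    MonoidAlgebra.coeff_single, MonoidAlgebra.coeff_single, MonoidAlgebra.coeff_single,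
    MonoidAlgebra.coeff_single, MonoidAlgebra.coeff_zero] at hval
  rw [Finsupp.add_apply, Finsupp.add_apply, Finsupp.add_apply,
    Finsupp.single_eq_of_ne' h1, Finsupp.single_eq_of_ne' h2, Finsupp.single_eq_of_ne' h3,
    Finsupp.single_eq_same, Finsupp.zero_apply, zero_add, zero_add, zero_add,
    nsmul_eq_mul, mul_one] at hval
  haveI : NeZero (2 ^ m) := ⟨by positivity⟩
  have hzero : ((2 ^ c : ℕ) : ZMod (2 ^ m)) = 0 := by exact_mod_cast hval
  rw [ZMod.natCast_eq_zero_iff] at hzero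
  have := (Nat.pow_dvd_pow_iff_le_right (by norm_num : 1 < 2)).mp hzero
  omega
end

section
/- In the ring ℤ[y]/(y² - 2y, 2^{m+1}·y) with m ≥ 1, the element η = 2^{s-3}(4y³ - y⁴) (for s ≥ 3) equals 2^s·y; in particular 2·η = 2^{s+1}·y, which is zero if and only if s ≥ m. -/
set_option maxHeartbeats 1000000 in
open Polynomial in
theorem stmt_16 (m s : ℕ) (hm : 1 ≤ m) (hs : 3 ≤ s) :
    let R := Polynomial ℤ ⧸ (Ideal.span
      {(X : Polynomial ℤ) ^ 2 - 2 * X, 2 ^ (m + 1) * X} : Ideal (Polynomial ℤ))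
    let y : R := Ideal.Quotient.mk _ X
    let η := 2 ^ (s - 3) * (4 * y ^ 3 - y ^ 4)
    η = 2 ^ s * y ∧ 2 * η = 2 ^ (s + 1) * y ∧ (2 * η = 0 ↔ m ≤ s) := by
  intro R y η
  set I : Ideal (Polynomial ℤ) :=
    Ideal.span {(X : Polynomial ℤ) ^ 2 - 2 * X, 2 ^ (m + 1) * X} with hI
  have hy2 : y ^ 2 = 2 * y := by
    have : ((Ideal.Quotient.mk I) ((X : Polynomial ℤ) ^ 2 - 2 * X)) = 0 :=
      Ideal.Quotient.eq_zero_iff_mem.mpr (Ideal.subset_span (by simp))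
    have h2 := this
    rw [map_sub, map_mul, map_pow, sub_eq_zero] at h2
    rw [map_ofNat] at h2
    exact h2
  have h2y : (2 : R) ^ (m + 1) * y = 0 := by
    have : ((Ideal.Quotient.mk I) ((2 : Polynomial ℤ) ^ (m + 1) * X)) = 0 :=
      Ideal.Quotient.eq_zero_iff_mem.mpr (Ideal.subset_span (by simp))
    rw [map_mul, map_pow] at this
    rw [map_ofNat] at this
    exact this
  have hy3 : y ^ 3 = 4 * y := by
    have : y ^ 3 = y ^ 2 * y := by ring
    rw [this, hy2]
    calc 2 * y * y = 2 * y ^ 2 := by ring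
    _ = 2 * (2 * y) := by rw [hy2]
    _ = 4 * y := by ring
  have hy4 : y ^ 4 = 8 * y := by
    have : y ^ 4 = y ^ 3 * y := by ring
    rw [this, hy3]
    calc 4 * y * y = 4 * y ^ 2 := by ring
    _ = 4 * (2 * y) := by rw [hy2]
    _ = 8 * y := by ring
  have hη : η = 2 ^ s * y := by
    show (2 : R) ^ (s - 3) * (4 * y ^ 3 - y ^ 4) = 2 ^ s * y
    rw [hy3, hy4]
    have hpow : (2 : R) ^ (s - 3) * 2 ^ 3 = 2 ^ s := by
      rw [← pow_add, Nat.sub_add_cancel hs]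
    calc (2 : R) ^ (s - 3) * (4 * (4 * y) - 8 * y)
        = (2 : R) ^ (s - 3) * 2 ^ 3 * y := by ring
    _ = 2 ^ s * y := by rw [hpow]
  have h2η : 2 * η = 2 ^ (s + 1) * y := by
    rw [hη]; ring
  refine ⟨hη, h2η, ?_⟩
  rw [h2η]
  constructor
  · -- 2^(s+1) * y = 0 → m ≤ s
    intro h
    by_contra hms
    push_neg at hms
    -- evaluation at X = 2 into ZMod (2^(m+2))
    haveI : NeZero (2 ^ (m + 2)) := ⟨by positivity⟩
    have hker : I ≤ RingHom.ker
        (eval₂RingHom (Int.castRingHom (ZMod (2 ^ (m + 2)))) 2) := by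
      rw [hI, Ideal.span_le]
      rintro p (rfl | rfl)
      · simp only [SetLike.mem_coe, RingHom.mem_ker, coe_eval₂RingHom, eval₂_sub,
          eval₂_mul, eval₂_pow, eval₂_X, eval₂_ofNat]
        norm_num
      · simp only [SetLike.mem_coe, RingHom.mem_ker, coe_eval₂RingHom, eval₂_mul,
          eval₂_pow, eval₂_X, eval₂_ofNat]
        have : ((2 : ZMod (2 ^ (m + 2)))) ^ (m + 1) * 2 = 2 ^ (m + 2) := by ring
        rw [this]
        have : ((2 ^ (m + 2) : ℕ) : ZMod (2 ^ (m + 2))) = 0 := ZMod.natCast_self _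
        push_cast at this
        exact this
    let φ : R →+* ZMod (2 ^ (m + 2)) :=
      Ideal.Quotient.lift I (eval₂RingHom (Int.castRingHom (ZMod (2 ^ (m + 2)))) 2)
        (fun a ha => RingHom.mem_ker.mp (hker ha))
    have hφy : φ y = 2 := by
      show Ideal.Quotient.lift I _ _ (Ideal.Quotient.mk I X) = 2
      rw [Ideal.Quotient.lift_mk]
      simp
    have := congrArg φ h
    rw [map_mul, map_pow, hφy, map_zero, map_ofNat] at this
    have h2 : ((2 : ZMod (2 ^ (m + 2)))) ^ (s + 1) * 2 = 2 ^ (s + 2) := by ring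
    rw [h2] at this
    have h2' : ((2 ^ (s + 2) : ℕ) : ZMod (2 ^ (m + 2))) = 0 := by push_cast; simpa [φ] using this
    rw [ZMod.natCast_eq_zero_iff] at h2'
    have := (Nat.pow_dvd_pow_iff_le_right (by norm_num : 1 < 2)).mp h2'
    omega
  · -- m ≤ s → 2^(s+1) * y = 0
    intro h
    have hsplit : s + 1 = (s - m) + (m + 1) := by omega
    have hsplit' : (2 : R) ^ (s + 1) = 2 ^ (s - m) * 2 ^ (m + 1) := by
      rw [← pow_add]; exact congrArg (2 ^ ·) hsplit
    rw [hsplit', mul_assoc, h2y, mul_zero]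
end
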